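/- Let f satisfy (A1)-(A2). Let (ξ_n)_{n∈ℕ} be independent, identically distributed real random variables on a probability space (Ω, F, P), each having an even density φ (φ(−x) = φ(x)) with φ(x) > 0 for x ∈ (−1,1) and φ(x) = 0 for x ∉ [−1,1]. Let (σ_n) be positive reals with Σ_n σ_n² < ∞. Then every solution (x_n) of x_{n+1} = max{f(x_n) + σ_n ξ_{n+1}, 0} with initial value x_0 > 0 satisfies P{ω ∈ Ω : lim_{n→∞} x_n(ω) = 0} ≤ 1/2. -/

import Mathlib

open MeasureTheory
open scoped ENNReal ProbabilityTheory

/-- Partial weighted sum `∑_{k=n}^{m-1} σ k * u (k+1)` of a sequence. -/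
noncomputable def stmt18Tsum (σ : ℕ → ℝ) (n m : ℕ) (u : ℕ → ℝ) : ℝ :=
  ∑ k ∈ Finset.Ico n m, σ k * u (k + 1)

lemma stmt18Tsum_measurable (σ : ℕ → ℝ) (n m : ℕ) : Measurable (stmt18Tsum σ n m) :=
  Finset.measurable_sum _ fun k _ => by fun_prop

lemma stmt18Tsum_neg (σ : ℕ → ℝ) (n m : ℕ) (u : ℕ → ℝ) :
    stmt18Tsum σ n m (fun k => -u k) = -stmt18Tsum σ n m u := by
  simp [stmt18Tsum, mul_neg, Finset.sum_neg_distrib]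

lemma stmt18Tsum_split (σ : ℕ → ℝ) {n m : ℕ} (h : n < m) (u : ℕ → ℝ) :
    stmt18Tsum σ n m u = σ n * u (n + 1) + stmt18Tsum σ (n + 1) m u :=
  Finset.sum_eq_sum_Ico_succ_bot h _

/-- The event (on sequence space) that tail weighted sums eventually have `limsup ≤ 0`. -/
def stmt18C (σ : ℕ → ℝ) : Set (ℕ → ℝ) :=
  ⋃ N : ℕ, ⋂ n : ℕ, ⋂ (_ : N ≤ n), ⋂ q : ℚ, ⋂ (_ : 0 < q),
    ⋃ M : ℕ, ⋂ m : ℕ, ⋂ (_ : M ≤ m), {u : ℕ → ℝ | stmt18Tsum σ n m u ≤ (q : ℝ)}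

lemma stmt18C_meas (σ : ℕ → ℝ) : MeasurableSet (stmt18C σ) := by
  refine MeasurableSet.iUnion fun N => ?_
  refine MeasurableSet.iInter fun n => ?_
  refine MeasurableSet.iInter fun _ => ?_
  refine MeasurableSet.iInter fun q => ?_
  refine MeasurableSet.iInter fun _ => ?_
  refine MeasurableSet.iUnion fun M => ?_
  refine MeasurableSet.iInter fun m => ?_
  refine MeasurableSet.iInter fun _ => ?_
  exact measurableSet_le (stmt18Tsum_measurable σ n m) measurable_const

lemma stmt18C_mem (σ : ℕ → ℝ) (u : ℕ → ℝ) :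
    u ∈ stmt18C σ ↔ ∃ N : ℕ, ∀ n, N ≤ n → ∀ q : ℚ, 0 < q →
      ∃ M : ℕ, ∀ m, M ≤ m → stmt18Tsum σ n m u ≤ (q : ℝ) := by
  simp [stmt18C, Set.mem_iUnion, Set.mem_iInter, Set.mem_setOf_eq]

/-- If both `u` and `-u` have eventually nonpositive tail sums, then the relevant entries
of `u` eventually vanish. -/
lemma stmt18_key (σ : ℕ → ℝ) (hσ : ∀ n, 0 < σ n) (u : ℕ → ℝ)
    (hu : ∃ N : ℕ, ∀ n, N ≤ n → ∀ q : ℚ, 0 < q →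
      ∃ M : ℕ, ∀ m, M ≤ m → stmt18Tsum σ n m u ≤ (q : ℝ))
    (hnu : ∃ N : ℕ, ∀ n, N ≤ n → ∀ q : ℚ, 0 < q →
      ∃ M : ℕ, ∀ m, M ≤ m → stmt18Tsum σ n m (fun k => -u k) ≤ (q : ℝ)) :
    ∃ N, ∀ n, N ≤ n → u (n + 1) = 0 := by
  obtain ⟨N₁, h1⟩ := hu
  obtain ⟨N₂, h2⟩ := hnu
  refine ⟨max N₁ N₂, fun n hn => ?_⟩
  have hn1 : N₁ ≤ n := le_trans (le_max_left _ _) hn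
  have hn2 : N₂ ≤ n := le_trans (le_max_right _ _) hn
  have hle : ∀ q : ℚ, 0 < q → σ n * u (n + 1) ≤ 2 * (q : ℝ) := by
    intro q hq
    obtain ⟨M₁, hM₁⟩ := h1 n hn1 q hq
    obtain ⟨M₂, hM₂⟩ := h2 (n + 1) (by omega) q hq
    set m := max (max M₁ M₂) (n + 1) with hm
    have ha := hM₁ m (by omega)
    have hb := hM₂ m (by omega)
    rw [stmt18Tsum_neg] at hb
    have hs := stmt18Tsum_split σ (show n < m by omega) u
    linarith
  have hge : ∀ q : ℚ, 0 < q → -(σ n * u (n + 1)) ≤ 2 * (q : ℝ) := by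
    intro q hq
    obtain ⟨M₁, hM₁⟩ := h2 n hn2 q hq
    obtain ⟨M₂, hM₂⟩ := h1 (n + 1) (by omega) q hq
    set m := max (max M₁ M₂) (n + 1) with hm
    have ha := hM₁ m (by omega)
    have hb := hM₂ m (by omega)
    have hs := stmt18Tsum_split σ (show n < m by omega) (fun k => -u k)
    rw [stmt18Tsum_neg, stmt18Tsum_neg] at hs
    rw [stmt18Tsum_neg] at ha
    rw [mul_neg] at hs
    linarith
  have h2q : ∀ a : ℝ, (∀ q : ℚ, 0 < q → a ≤ 2 * (q : ℝ)) → a ≤ 0 := by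
    intro a h
    by_contra hc
    push_neg at hc
    obtain ⟨q, hq0, hqa⟩ := exists_rat_btwn (half_pos hc)
    have hq0' : 0 < q := by exact_mod_cast hq0
    have := h q hq0'
    linarith
  have e1 : σ n * u (n + 1) ≤ 0 := h2q _ hle
  have e2 : 0 ≤ σ n * u (n + 1) := by
    have := h2q _ hge; linarith
  have : σ n * u (n + 1) = 0 := le_antisymm e1 e2
  rcases mul_eq_zero.1 this with h | h
  · exact absurd h (hσ n).ne'
  · exact h

/-- A measure with even density on `ℝ` is invariant under negation. -/
lemma stmt18_map_neg (φ : ℝ → ℝ≥0∞) (hφ : ∀ y, φ (-y) = φ y) :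
    Measure.map Neg.neg (volume.withDensity φ) = volume.withDensity φ := by
  ext s hs
  rw [Measure.map_apply measurable_neg hs, withDensity_apply _ (measurable_neg hs),
    withDensity_apply _ hs, ← lintegral_indicator (measurable_neg hs) _,
    ← lintegral_indicator hs _]
  have h2 : (volume : Measure ℝ) = Measure.map (MeasurableEquiv.neg ℝ) volume := by
    rw [show ⇑(MeasurableEquiv.neg ℝ) = (Neg.neg : ℝ → ℝ) from rfl]
    exact (Measure.measurePreserving_neg _).map_eq.symm
  conv_lhs => rw [h2]
  rw [lintegral_map_equiv]
  refine lintegral_congr fun x => ?_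
  by_cases hx : x ∈ s
  · simp [Set.indicator, hx, hφ, MeasurableEquiv.neg]
  · simp [Set.indicator, hx, MeasurableEquiv.neg]

/-- For a countable index type, measurable boxes generate the product σ-algebra. -/
lemma stmt18_generateFrom_pi :
    MeasurableSpace.generateFrom
        (Set.pi Set.univ '' Set.pi Set.univ fun _ : ℕ => { s : Set ℝ | MeasurableSet s })
      = (MeasurableSpace.pi : MeasurableSpace (ℕ → ℝ)) := by
  apply le_antisymm
  · apply MeasurableSpace.generateFrom_le
    rintro _ ⟨A, hA, rfl⟩
    exact MeasurableSet.univ_pi fun i => hA i (Set.mem_univ i)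
  · rw [MeasurableSpace.pi_eq_generateFrom_projections]
    apply MeasurableSpace.generateFrom_le
    rintro _ ⟨i, A, hA, rfl⟩
    apply MeasurableSpace.measurableSet_generateFrom
    refine ⟨Function.update (fun _ => Set.univ) i A, fun j _ => ?_, ?_⟩
    · by_cases h : j = i
      · subst h; simpa using hA
      · simp [Function.update_of_ne h]
    · ext u
      simp only [Set.mem_pi, Set.mem_univ, true_implies, Function.update_apply,
        Set.mem_preimage]
      constructor
      · intro h
        have := h i; simpa using this
      · intro h j
        by_cases hj : j = i
        · subst hj; simpa using h
        · simp [hj]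

/-- Two independent sequences with identical marginal laws give equal measures to
countable intersections of coordinate preimages. -/
lemma stmt18_iInter_eq {Ω : Type*} [MeasureSpace Ω] [IsProbabilityMeasure (ℙ : Measure Ω)]
    (g h : ℕ → Ω → ℝ) (hg : ∀ n, Measurable (g n)) (hh : ∀ n, Measurable (h n))
    (hgi : ProbabilityTheory.iIndepFun g ℙ)
    (hhi : ProbabilityTheory.iIndepFun h ℙ)
    (hmarg : ∀ n, Measure.map (g n) ℙ = Measure.map (h n) ℙ)
    (A : ℕ → Set ℝ) (hA : ∀ n, MeasurableSet (A n)) :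
    ℙ (⋂ n, g n ⁻¹' A n) = ℙ (⋂ n, h n ⁻¹' A n) := by
  have t1 := tendsto_measure_iInter_le (μ := (ℙ : Measure Ω))
    (f := fun n => g n ⁻¹' A n)
    (fun i => ((hg i) (hA i)).nullMeasurableSet) ⟨0, measure_ne_top _ _⟩
  have t2 := tendsto_measure_iInter_le (μ := (ℙ : Measure Ω))
    (f := fun n => h n ⁻¹' A n)
    (fun i => ((hh i) (hA i)).nullMeasurableSet) ⟨0, measure_ne_top _ _⟩
  have key : ∀ i : ℕ, ℙ (⋂ j ≤ i, g j ⁻¹' A j) = ℙ (⋂ j ≤ i, h j ⁻¹' A j) := by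
    intro i
    have e1 : (⋂ j ≤ i, g j ⁻¹' A j) = ⋂ j ∈ Finset.Iic i, g j ⁻¹' A j := by simp
    have e2 : (⋂ j ≤ i, h j ⁻¹' A j) = ⋂ j ∈ Finset.Iic i, h j ⁻¹' A j := by simp
    rw [e1, e2, hgi.meas_biInter (fun j _ => ⟨A j, hA j, rfl⟩),
      hhi.meas_biInter (fun j _ => ⟨A j, hA j, rfl⟩)]
    refine Finset.prod_congr rfl fun j _ => ?_
    rw [← Measure.map_apply (hg j) (hA j), ← Measure.map_apply (hh j) (hA j), hmarg j]
  have heq : (fun i : ℕ => ℙ (⋂ j ≤ i, g j ⁻¹' A j))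
      = fun i : ℕ => ℙ (⋂ j ≤ i, h j ⁻¹' A j) := funext key
  rw [heq] at t1
  exact tendsto_nhds_unique t1 t2

/-- Lemma `lem:<12`: under (A1)-(A2), for i.i.d. noises with an even density positive
on `(-1,1)` and vanishing outside `[-1,1]`, and square-summable positive amplitudes,
every solution of `x_{n+1} = max{f(x_n) + σ_n ξ_{n+1}, 0}` with `x_0 > 0` tends to
zero with probability at most `1/2`. -/
theorem stmt_18 {Ω : Type*} [MeasureSpace Ω] [IsProbabilityMeasure (ℙ : Measure Ω)]
    (f : ℝ → ℝ) (K : ℝ)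
    (hf_cont : ContinuousOn f (Set.Ici 0))
    (hf_maps : ∀ y : ℝ, 0 ≤ y → 0 ≤ f y)
    (hf0 : f 0 = 0)
    (hf_pos : ∀ y : ℝ, 0 < y → 0 < f y)
    (hK : 0 < K) (hfK : f K = K)
    (hbelow : ∀ y : ℝ, 0 < y → y < K → y < f y)
    (habove : ∀ y : ℝ, K < y → f y < y)
    (ξ : ℕ → Ω → ℝ) (hmeas : ∀ n, Measurable (ξ n))
    (hindep : ProbabilityTheory.iIndepFun ξ ℙ)
    (φ : ℝ → ℝ≥0∞)
    (hdens : ∀ n, Measure.map (ξ n) ℙ = volume.withDensity φ)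
    (hφpos : ∀ y ∈ Set.Ioo (-1 : ℝ) 1, 0 < φ y)
    (hφzero : ∀ y ∉ Set.Icc (-1 : ℝ) 1, φ y = 0)
    (hφeven : ∀ y : ℝ, φ (-y) = φ y)
    (σ : ℕ → ℝ) (hσpos : ∀ n, 0 < σ n)
    (hσl2 : Summable (fun n => (σ n) ^ 2))
    (x : ℕ → Ω → ℝ) (hx0 : ∀ ω, 0 < x 0 ω)
    (hrec : ∀ n ω, x (n + 1) ω = max (f (x n ω) + σ n * ξ (n + 1) ω) 0) :
    ℙ {ω : Ω | Filter.Tendsto (fun n => x n ω) Filter.atTop (nhds 0)} ≤ 1 / 2 := by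
  classical
  set Φ : Ω → ℕ → ℝ := fun ω n => ξ n ω with hΦdef
  set Ψ : Ω → ℕ → ℝ := fun ω n => -ξ n ω with hΨdef
  have hΦ : Measurable Φ := measurable_pi_lambda _ hmeas
  have hΨ : Measurable Ψ := measurable_pi_lambda _ (fun n => (hmeas n).neg)
  have hξneg : ProbabilityTheory.iIndepFun
      (fun n ω => -ξ n ω) ℙ := by
    have := hindep.comp (fun _ => (Neg.neg : ℝ → ℝ)) (fun _ => measurable_neg)
    exact this
  have hmargneg : ∀ n, Measure.map (ξ n) ℙ = Measure.map (fun ω => -ξ n ω) ℙ := by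
    intro n
    have hc : (fun ω => -ξ n ω) = (Neg.neg ∘ ξ n) := rfl
    rw [hc, ← Measure.map_map measurable_neg (hmeas n), hdens n,
      stmt18_map_neg φ hφeven]
  have hmapeq : Measure.map Φ ℙ = Measure.map Ψ ℙ := by
    have hp1 : IsProbabilityMeasure (Measure.map Φ ℙ) :=
      Measure.isProbabilityMeasure_map hΦ.aemeasurable
    have hp2 : IsProbabilityMeasure (Measure.map Ψ ℙ) :=
      Measure.isProbabilityMeasure_map hΨ.aemeasurable
    refine ext_of_generate_finite _ stmt18_generateFrom_pi.symm isPiSystem_pi ?_ (by simp)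
    rintro _ ⟨A, hA, rfl⟩
    have hA' : ∀ i, MeasurableSet (A i) := fun i => hA i (Set.mem_univ i)
    rw [Measure.map_apply hΦ (MeasurableSet.univ_pi hA'),
      Measure.map_apply hΨ (MeasurableSet.univ_pi hA')]
    have e1 : Φ ⁻¹' Set.pi Set.univ A = ⋂ n, ξ n ⁻¹' A n := by
      ext ω; simp [hΦdef, Set.mem_pi]
    have e2 : Ψ ⁻¹' Set.pi Set.univ A = ⋂ n, (fun ω => -ξ n ω) ⁻¹' A n := by
      ext ω; simp [hΨdef, Set.mem_pi]
    rw [e1, e2]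
    exact stmt18_iInter_eq ξ (fun n ω => -ξ n ω) hmeas (fun n => (hmeas n).neg)
      hindep hξneg hmargneg A hA'
  set B := Φ ⁻¹' stmt18C σ with hBdef
  set B' := Ψ ⁻¹' stmt18C σ with hB'def
  have hB'meas : MeasurableSet B' := hΨ (stmt18C_meas σ)
  -- Step A: the convergence event is contained in B
  have stepA : {ω : Ω | Filter.Tendsto (fun n => x n ω) Filter.atTop (nhds 0)} ⊆ B := by
    intro ω hω
    simp only [Set.mem_setOf_eq] at hω
    obtain ⟨N₀, hN₀⟩ := Filter.eventually_atTop.1 (hω.eventually_lt_const hK)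
    set N := max N₀ 1 with hN
    have hxK : ∀ n, N ≤ n → x n ω < K := fun n hn => hN₀ n (le_trans (le_max_left _ _) hn)
    have hx_nonneg : ∀ n, 1 ≤ n → 0 ≤ x n ω := by
      intro n hn
      match n, hn with
      | (m + 1), _ => rw [hrec]; exact le_max_right _ _
    have hmono : ∀ n, N ≤ n → ∀ m, n ≤ m →
        x n ω + stmt18Tsum σ n m (Φ ω) ≤ x m ω := by
      intro n hn m hm
      induction m, hm using Nat.le_induction with
      | base => simp [stmt18Tsum]
      | succ m hm ih =>
        have h1 : 0 ≤ x m ω :=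
          hx_nonneg m (le_trans (le_trans (le_max_right N₀ 1) hn) hm)
        have hfge : x m ω ≤ f (x m ω) := by
          rcases eq_or_lt_of_le h1 with h | h
          · rw [← h, hf0]
          · exact (hbelow _ h (hxK m (le_trans hn hm))).le
        have hstep : x m ω + σ m * ξ (m + 1) ω ≤ x (m + 1) ω := by
          rw [hrec]
          exact le_trans (add_le_add_left hfge _) (le_max_left _ _)
        have hsum : stmt18Tsum σ n (m + 1) (Φ ω)
            = stmt18Tsum σ n m (Φ ω) + σ m * ξ (m + 1) ω := by
          rw [stmt18Tsum, stmt18Tsum, Finset.sum_Ico_succ_top hm]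
        rw [hsum]; linarith
    refine Set.mem_preimage.2 ((stmt18C_mem σ (Φ ω)).2 ⟨N, fun n hn q hq => ?_⟩)
    have hq' : (0 : ℝ) < q := by exact_mod_cast hq
    obtain ⟨M₀, hM₀⟩ := Filter.eventually_atTop.1 (hω.eventually_lt_const hq')
    refine ⟨max M₀ n, fun m hm => ?_⟩
    have h1 := hmono n hn m (le_trans (le_max_right _ _) hm)
    have h2 := hM₀ m (le_trans (le_max_left _ _) hm)
    have h3 : 0 ≤ x n ω := hx_nonneg n (le_trans (le_max_right N₀ 1) hn)
    linarith
  -- Step B: B ∩ B' is contained in a null event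
  have stepB : B ∩ B' ⊆ ⋃ N : ℕ, {ω : Ω | ξ (N + 1) ω = 0} := by
    rintro ω ⟨hω1, hω2⟩
    have h1 := (stmt18C_mem σ (Φ ω)).1 hω1
    have h2' : (fun k => -(Φ ω) k) ∈ stmt18C σ := by
      have he : (fun k => -(Φ ω) k) = Ψ ω := by funext k; simp [hΦdef, hΨdef]
      rw [he]; exact hω2
    have h2 := (stmt18C_mem σ _).1 h2'
    obtain ⟨N, hN⟩ := stmt18_key σ hσpos (Φ ω) h1 h2
    refine Set.mem_iUnion.2 ⟨N, ?_⟩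
    have := hN N le_rfl
    simpa [hΦdef] using this
  have hzero : ∀ N : ℕ, ℙ {ω : Ω | ξ (N + 1) ω = 0} = 0 := by
    intro N
    have he : {ω : Ω | ξ (N + 1) ω = 0} = ξ (N + 1) ⁻¹' {0} := rfl
    rw [he, ← Measure.map_apply (hmeas _) (measurableSet_singleton 0), hdens,
      withDensity_apply _ (measurableSet_singleton 0)]
    exact setLIntegral_measure_zero _ _ (measure_singleton 0)
  have hnull : ℙ (B ∩ B') = 0 :=
    measure_mono_null stepB (measure_iUnion_null hzero)
  have hPB : ℙ B = ℙ B' := by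
    rw [hBdef, hB'def, ← Measure.map_apply hΦ (stmt18C_meas σ),
      ← Measure.map_apply hΨ (stmt18C_meas σ), hmapeq]
  have hle1 : ℙ B + ℙ B ≤ 1 := by
    calc ℙ B + ℙ B = ℙ B + ℙ B' := by rw [hPB]
    _ = ℙ (B ∪ B') + ℙ (B ∩ B') := (measure_union_add_inter B hB'meas).symm
    _ ≤ 1 + 0 := add_le_add prob_le_one hnull.le
    _ = 1 := by simp
  have hhalf : ℙ B ≤ 1 / 2 := by
    rw [ENNReal.le_div_iff_mul_le (Or.inl two_ne_zero) (Or.inl ENNReal.ofNat_ne_top), mul_two]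
    exact hle1
  exact le_trans (measure_mono stepA) hhalf
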